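/- Let a₁,a₂,a₃,a₄ be nonzero integers with α = a₁a₂a₃a₄ and ψ₁(x)=Σaᵢxᵢ², ψ̃₁(w)=Σᵢ(α/aᵢ)wᵢ². For every odd prime p with p ∤ 2α, every integer r ≥ 1 and every w∈ℤ⁴, S_{1,p^r}(w) = χ_p(α)^r · p^{2r} · c_{p^r}(ψ̃₁(w)), where S_{1,c}(w) = Σ_{a=1, gcd(a,c)=1}^{c} Σ_{k∈{0,…,c−1}⁴} e((a·ψ₁(k) + w·k)/c), c_m(n) = Σ_{a=1, gcd(a,m)=1}^{m} e(an/m) denotes the Ramanujan sum, χ_p is the Legendre symbol modulo p, and e(t)=exp(2πit). -/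

import Mathlib

/-- `ψ(c, x) = c₁x₁² + c₂x₂² + c₃x₃² + c₄x₄²` for a diagonal quaternary quadratic form. -/
def psi (c : Fin 4 → ℤ) (x : Fin 4 → ℤ) : ℤ := ∑ i, c i * x i ^ 2

/-- The adjoint form `ψ̃₁(w) = Σᵢ (α/aᵢ)·wᵢ²` where `α = a₁a₂a₃a₄`. -/
def psit (a : Fin 4 → ℤ) (w : Fin 4 → ℤ) : ℤ := ∑ i, ((∏ j, a j) / a i) * w i ^ 2

/-- The complete exponential sum
`S_{1,c}(w) = Σ*_{a mod c} Σ_{k mod c} e((aψ₁(k)+w·k)/c)` with `e(t) = exp(2πit)`. -/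
noncomputable def S1 (a : Fin 4 → ℤ) (c : ℕ) (w : Fin 4 → ℤ) : ℂ :=
  ∑ x ∈ (Finset.range c).filter (fun x => Nat.Coprime x c),
    ∑ k ∈ Fintype.piFinset fun _ : Fin 4 => Finset.range c,
      Complex.exp (2 * (Real.pi : ℂ) * Complex.I *
        (((x : ℂ) * ((psi a (fun i => (k i : ℤ)) : ℤ) : ℂ) + ∑ i, (w i : ℂ) * (k i : ℂ))
          / (c : ℂ)))

/-- The Ramanujan sum `c_m(n) = Σ*_{a mod m} e(an/m)`. -/
noncomputable def ramanujanSum (m : ℕ) (n : ℤ) : ℂ :=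
  ∑ x ∈ (Finset.range m).filter (fun x => Nat.Coprime x m),
    Complex.exp (2 * (Real.pi : ℂ) * Complex.I * ((x : ℂ) * (n : ℂ) / (m : ℂ)))

open Finset

noncomputable def eN (M : ℕ) (n : ℤ) : ℂ :=
  Complex.exp (2 * (Real.pi : ℂ) * Complex.I * n / M)

lemma eN_add (M : ℕ) (m n : ℤ) : eN M (m + n) = eN M m * eN M n := by
  rw [eN, eN, eN, ← Complex.exp_add]
  congr 1
  push_cast
  ring

lemma eN_zero (M : ℕ) : eN M 0 = 1 := by simp [eN]

lemma eN_nat_mul (M : ℕ) (t : ℤ) : eN M (M * t) = 1 := by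
  rcases Nat.eq_zero_or_pos M with h | h
  · simp [eN, h]
  · have hM : (M : ℂ) ≠ 0 := by exact_mod_cast h.ne'
    rw [eN]
    have : 2 * (Real.pi : ℂ) * Complex.I * (((M : ℤ) * t : ℤ) : ℂ) / M
        = t * (2 * Real.pi * Complex.I) := by
      push_cast
      field_simp
    rw [this, Complex.exp_int_mul_two_pi_mul_I]

lemma eN_sum {ι : Type*} (M : ℕ) (s : Finset ι) (f : ι → ℤ) :
    eN M (∑ i ∈ s, f i) = ∏ i ∈ s, eN M (f i) := by
  induction s using Finset.cons_induction with
  | empty => simp [eN_zero]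
  | cons a s ha ih => rw [Finset.sum_cons, Finset.prod_cons, eN_add, ih]

lemma eN_std (M : ℕ) [NeZero M] (n : ℤ) : eN M n = ZMod.stdAddChar (n : ZMod M) := by
  rw [ZMod.stdAddChar_coe, eN]

lemma eN_congr (M : ℕ) [NeZero M] (m n : ℤ) (h : (m : ZMod M) = (n : ZMod M)) :
    eN M m = eN M n := by
  rw [eN_std, eN_std, h]

lemma eN_mul_cancel (M c : ℕ) (hc : c ≠ 0) (n : ℤ) : eN (M * c) ((c : ℤ) * n) = eN M n := by
  rcases Nat.eq_zero_or_pos M with h | h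
  · simp [eN, h]
  · have hM : (M : ℂ) ≠ 0 := by exact_mod_cast h.ne'
    have hc' : (c : ℂ) ≠ 0 := by exact_mod_cast hc
    rw [eN, eN]
    congr 1
    push_cast
    field_simp

lemma eN_pow (M : ℕ) (n : ℤ) (v : ℕ) : eN M (n * v) = eN M n ^ v := by
  induction v with
  | zero => simp [eN_zero]
  | succ v ih =>
      have : n * ((v : ℤ) + 1) = n * v + n := by ring
      rw [Nat.cast_succ, this, eN_add, ih, pow_succ]

lemma eN_eq_one_iff (M : ℕ) (hM : M ≠ 0) (n : ℤ) : eN M n = 1 ↔ (M : ℤ) ∣ n := by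
  constructor
  · intro h
    rw [eN, Complex.exp_eq_one_iff] at h
    obtain ⟨k, hk⟩ := h
    have hM' : (M : ℂ) ≠ 0 := by exact_mod_cast hM
    have h2pi : (2 * (Real.pi : ℂ) * Complex.I) ≠ 0 := by
      simp [Real.pi_ne_zero, Complex.I_ne_zero]
    have h2 : (n : ℂ) = k * M := by
      have h3 : (2 * (Real.pi : ℂ) * Complex.I) * n = (2 * (Real.pi : ℂ) * Complex.I) * (k * M) := by
        field_simp at hk
        linear_combination (2 * (Real.pi : ℂ) * Complex.I) * hk
      exact mul_left_cancel₀ h2pi h3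
    have : n = k * M := by exact_mod_cast h2
    exact ⟨k, by linarith⟩
  · rintro ⟨t, rfl⟩
    exact eN_nat_mul M t

lemma sum_eN_geom (M : ℕ) (hM : M ≠ 0) (n : ℤ) :
    ∑ v ∈ Finset.range M, eN M (n * v) = if (M : ℤ) ∣ n then (M : ℂ) else 0 := by
  split_ifs with h
  · obtain ⟨t, rfl⟩ := h
    rw [Finset.sum_congr rfl fun v _ => ?_, Finset.sum_const, Finset.card_range, nsmul_eq_mul,
      mul_one]
    rw [show ((M : ℤ) * t * (v : ℤ)) = (M : ℤ) * (t * v) by ring]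
    exact eN_nat_mul M (t * v)
  · have h1 : eN M n ≠ 1 := fun hh => h ((eN_eq_one_iff M hM n).mp hh)
    rw [Finset.sum_congr rfl fun v _ => eN_pow M n v, geom_sum_eq h1 M]
    have : eN M n ^ M = 1 := by
      rw [← eN_pow, mul_comm, eN_nat_mul]
    rw [this]
    simp

lemma sum_range_zmod (M : ℕ) [NeZero M] (F : ZMod M → ℂ) :
    ∑ k ∈ Finset.range M, F (k : ZMod M) = ∑ x : ZMod M, F x := by
  refine Finset.sum_nbij' (fun k => (k : ZMod M)) (fun x => x.val) ?_ ?_ ?_ ?_ ?_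
  · intro k _; exact Finset.mem_univ _
  · intro x _; exact Finset.mem_range.mpr (ZMod.val_lt x)
  · intro k hk; exact ZMod.val_cast_of_lt (Finset.mem_range.mp hk)
  · intro x _; exact ZMod.natCast_zmod_val x
  · intro k _; rfl

lemma sum_pi_zmod (M : ℕ) [NeZero M] (F : (Fin 4 → ZMod M) → ℂ) :
    ∑ k ∈ Fintype.piFinset (fun _ : Fin 4 => Finset.range M), F (fun i => (k i : ZMod M))
      = ∑ x : Fin 4 → ZMod M, F x := by
  refine Finset.sum_nbij' (fun k => (fun i => (k i : ZMod M)))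
    (fun x => (fun i => (x i).val)) ?_ ?_ ?_ ?_ ?_
  · intro k _; exact Finset.mem_univ _
  · intro x _
    simp only [Fintype.mem_piFinset, Finset.mem_range]
    exact fun i => ZMod.val_lt _
  · intro k hk
    funext i
    exact ZMod.val_cast_of_lt (Finset.mem_range.mp (Fintype.mem_piFinset.mp hk i))
  · intro x _; funext i; exact ZMod.natCast_zmod_val _
  · intro k _; rfl

lemma sum_coprime_units (M : ℕ) [NeZero M] (F : ZMod M → ℂ) :
    ∑ x ∈ (Finset.range M).filter (fun x => Nat.Coprime x M), F (x : ZMod M)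
      = ∑ u : (ZMod M)ˣ, F u := by
  refine Finset.sum_nbij'
    (fun k => if h : Nat.Coprime k M then ZMod.unitOfCoprime k h else 1)
    (fun u => (u : ZMod M).val) ?_ ?_ ?_ ?_ ?_
  · intro k _; exact Finset.mem_univ _
  · intro u _
    simp only [Finset.mem_filter, Finset.mem_range]
    exact ⟨ZMod.val_lt _, ZMod.val_coe_unit_coprime u⟩
  · intro k hk
    obtain ⟨hk1, hk2⟩ := Finset.mem_filter.mp hk
    beta_reduce
    rw [dif_pos hk2]
    simp only [ZMod.coe_unitOfCoprime]
    exact ZMod.val_cast_of_lt (Finset.mem_range.mp hk1)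
  · intro u _
    have h : Nat.Coprime (u : ZMod M).val M := ZMod.val_coe_unit_coprime u
    beta_reduce
    rw [dif_pos h]
    ext
    simp [ZMod.coe_unitOfCoprime, ZMod.natCast_zmod_val]
  · intro k hk
    obtain ⟨_, hk2⟩ := Finset.mem_filter.mp hk
    beta_reduce
    rw [dif_pos hk2]
    simp [ZMod.coe_unitOfCoprime]

lemma complete_sq {N : ℕ} [NeZero N] (b v m : ZMod N) (h : 2 * b * m = v) :
    ∑ t : ZMod N, ZMod.stdAddChar (b * t ^ 2 + v * t)
      = ZMod.stdAddChar (-(b * m ^ 2)) * ∑ t : ZMod N, ZMod.stdAddChar (b * t ^ 2) := by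
  calc ∑ t : ZMod N, ZMod.stdAddChar (b * t ^ 2 + v * t)
      = ∑ t : ZMod N, ZMod.stdAddChar (-(b * m ^ 2)) * ZMod.stdAddChar (b * (t + m) ^ 2) := by
        refine Finset.sum_congr rfl fun t _ => ?_
        rw [← AddChar.map_add_eq_mul]
        congr 1
        linear_combination (-(t : ZMod N)) * h
    _ = ∑ s : ZMod N, ZMod.stdAddChar (-(b * m ^ 2)) * ZMod.stdAddChar (b * s ^ 2) := by
        apply Fintype.sum_equiv (Equiv.addRight m)
        intro t
        simp
    _ = _ := by rw [← Finset.mul_sum]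

lemma Gp_base (p : ℕ) [Fact p.Prime] (hp2 : p ≠ 2) (b : ZMod p) (hb : b ≠ 0) :
    ∑ t : ZMod p, ZMod.stdAddChar (b * t ^ 2)
      = ((quadraticChar (ZMod p)).ringHomComp (Int.castRingHom ℂ)) b *
          gaussSum ((quadraticChar (ZMod p)).ringHomComp (Int.castRingHom ℂ))
            ZMod.stdAddChar := by
  haveI : NeZero p := ⟨(Fact.out : p.Prime).ne_zero⟩
  set χ := quadraticChar (ZMod p) with hχ
  set χ' := χ.ringHomComp (Int.castRingHom ℂ) with hχ'
  set ψ := (ZMod.stdAddChar (N := p)) with hψ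
  have hchar : ringChar (ZMod p) ≠ 2 := by rw [ZMod.ringChar_zmod_n]; exact hp2
  have step1 : ∑ t : ZMod p, ψ (b * t ^ 2)
      = ∑ s : ZMod p, (((χ s + 1 : ℤ)) : ℂ) * ψ (b * s) := by
    rw [← Finset.sum_fiberwise Finset.univ (fun t : ZMod p => t ^ 2)
      (fun t => ψ (b * t ^ 2))]
    refine Finset.sum_congr rfl fun s _ => ?_
    have hcard : ((Finset.filter (fun t : ZMod p => t ^ 2 = s) Finset.univ).card : ℤ)
        = χ s + 1 := by
      have := quadraticChar_card_sqrts hchar s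
      rwa [Set.toFinset_setOf] at this
    calc ∑ t ∈ Finset.filter (fun t : ZMod p => t ^ 2 = s) Finset.univ, ψ (b * t ^ 2)
        = ∑ t ∈ Finset.filter (fun t : ZMod p => t ^ 2 = s) Finset.univ, ψ (b * s) := by
          refine Finset.sum_congr rfl fun t ht => ?_
          rw [(Finset.mem_filter.mp ht).2]
      _ = ((Finset.filter (fun t : ZMod p => t ^ 2 = s) Finset.univ).card : ℂ) * ψ (b * s) := by
          rw [Finset.sum_const, nsmul_eq_mul]
      _ = (((χ s + 1 : ℤ)) : ℂ) * ψ (b * s) := by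
          rw [← hcard]; push_cast; ring_nf
  have step2 : ∑ s : ZMod p, (((χ s + 1 : ℤ)) : ℂ) * ψ (b * s)
      = gaussSum χ' (ψ.mulShift b) + ∑ s : ZMod p, ψ (s * b) := by
    rw [gaussSum]
    rw [← Finset.sum_add_distrib]
    refine Finset.sum_congr rfl fun s _ => ?_
    rw [AddChar.mulShift_apply]
    have : χ' s = ((χ s : ℤ) : ℂ) := rfl
    rw [this]
    push_cast
    rw [mul_comm s b]
    ring
  have step3 : ∑ s : ZMod p, ψ (s * b) = 0 := by
    rw [AddChar.sum_mulShift b (ZMod.isPrimitive_stdAddChar p), if_neg hb]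
    norm_num
  have hu : IsUnit b := hb.isUnit
  obtain ⟨u, hub⟩ := hu
  have hms := gaussSum_mulShift χ' ψ u
  have hbsq : χ' b * χ' b = 1 := by
    have : χ' b = ((χ b : ℤ) : ℂ) := rfl
    rw [this, ← Int.cast_mul, ← pow_two, quadraticChar_sq_one hb]
    norm_num
  have step4 : gaussSum χ' (ψ.mulShift b) = χ' b * gaussSum χ' ψ := by
    rw [← hub] at hbsq ⊢
    calc gaussSum χ' (ψ.mulShift ↑u) = 1 * gaussSum χ' (ψ.mulShift ↑u) := (one_mul _).symm
      _ = χ' ↑u * (χ' ↑u * gaussSum χ' (ψ.mulShift ↑u)) := by rw [← hbsq]; ring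
      _ = χ' ↑u * gaussSum χ' ψ := by rw [hms]
  rw [step1, step2, step3, step4, add_zero]

lemma gauss4 (p : ℕ) [Fact p.Prime] (hp2 : p ≠ 2) :
    gaussSum ((quadraticChar (ZMod p)).ringHomComp (Int.castRingHom ℂ))
        (ZMod.stdAddChar (N := p)) ^ 4 = (p : ℂ) ^ 2 := by
  haveI : NeZero p := ⟨(Fact.out : p.Prime).ne_zero⟩
  set χ := quadraticChar (ZMod p) with hχ
  set χ' := χ.ringHomComp (Int.castRingHom ℂ) with hχ'
  have hchar : ringChar (ZMod p) ≠ 2 := by rw [ZMod.ringChar_zmod_n]; exact hp2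
  have h1 : χ' ≠ 1 :=
    (MulChar.ringHomComp_ne_one_iff (RingHom.injective_int _)).mpr (quadraticChar_ne_one hchar)
  have h2 : χ'.IsQuadratic := (quadraticChar_isQuadratic (ZMod p)).comp _
  have h3 := gaussSum_sq h1 h2 (ZMod.isPrimitive_stdAddChar p)
  have hm1 : χ' (-1) * χ' (-1) = 1 := by
    have : χ' (-1) = ((χ (-1) : ℤ) : ℂ) := rfl
    rw [this, ← Int.cast_mul, ← pow_two,
      quadraticChar_sq_one (neg_ne_zero.mpr (one_ne_zero : (1 : ZMod p) ≠ 0))]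
    norm_num
  calc gaussSum χ' ZMod.stdAddChar ^ 4 = (gaussSum χ' ZMod.stdAddChar ^ 2) ^ 2 := by ring
    _ = (χ' (-1) * (Fintype.card (ZMod p) : ℂ)) ^ 2 := by rw [h3]
    _ = (χ' (-1) * χ' (-1)) * (Fintype.card (ZMod p) : ℂ) ^ 2 := by ring
    _ = (p : ℂ) ^ 2 := by rw [hm1, one_mul, ZMod.card]

lemma Grec (p : ℕ) (hp : p.Prime) (hp2 : p ≠ 2) (b : ℤ) (hb : ¬((p : ℤ) ∣ b)) (s : ℕ) :
    ∑ k ∈ Finset.range (p ^ (s + 2)), eN (p ^ (s + 2)) (b * (k : ℤ) ^ 2)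
      = (p : ℂ) * ∑ k ∈ Finset.range (p ^ s), eN (p ^ s) (b * (k : ℤ) ^ 2) := by
  have hp0 : p ≠ 0 := hp.ne_zero
  have hppos : 0 < p := hp.pos
  set P := p ^ (s + 1) with hPdef
  set N := p ^ (s + 2) with hNdef
  have hPpos : 0 < P := pow_pos hppos _
  have hNP : N = P * p := by rw [hNdef, hPdef, pow_succ]
  have hNpP : N = p ^ s * p ^ 2 := by rw [hNdef, ← pow_add]
  have hPNz : ((P : ℤ)) * ((P : ℤ)) = ((N : ℤ)) * ((p ^ s : ℕ) : ℤ) := by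
    have : P * P = N * p ^ s := by
      rw [hPdef, hNdef, ← pow_add, ← pow_add]
      congr 1
      omega
    exact_mod_cast this
  -- Step A : reindex by (u, v) ↦ u + P * v
  have stepA : ∑ k ∈ Finset.range N, eN N (b * (k : ℤ) ^ 2)
      = ∑ uv ∈ (Finset.range P) ×ˢ (Finset.range p),
          eN N (b * ((uv.1 + P * uv.2 : ℕ) : ℤ) ^ 2) := by
    refine Finset.sum_nbij' (fun k => (k % P, k / P)) (fun uv => uv.1 + P * uv.2)
      ?_ ?_ ?_ ?_ ?_
    · intro k hk
      rw [Finset.mem_product]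
      refine ⟨Finset.mem_range.mpr (Nat.mod_lt _ hPpos), Finset.mem_range.mpr ?_⟩
      have hkN : k < N := Finset.mem_range.mp hk
      rw [Nat.div_lt_iff_lt_mul hPpos]
      rwa [hNP, mul_comm] at hkN
    · intro uv huv
      rw [Finset.mem_product] at huv
      obtain ⟨h1, h2⟩ := huv
      rw [Finset.mem_range] at h1 h2 ⊢
      show uv.1 + P * uv.2 < N
      have h4 : uv.1 + P * uv.2 < P * (uv.2 + 1) := by rw [Nat.mul_succ]; omega
      have h5 : P * (uv.2 + 1) ≤ P * p := Nat.mul_le_mul_left _ h2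
      rw [hNP]
      omega
    · intro k _
      simp only
      exact Nat.mod_add_div k P
    · intro uv huv
      rw [Finset.mem_product] at huv
      obtain ⟨h1, h2⟩ := huv
      rw [Finset.mem_range] at h1 h2
      have e1 : (uv.1 + P * uv.2) % P = uv.1 := by
        rw [Nat.add_mul_mod_self_left, Nat.mod_eq_of_lt h1]
      have e2 : (uv.1 + P * uv.2) / P = uv.2 := by
        rw [Nat.add_mul_div_left _ _ hPpos, Nat.div_eq_of_lt h1, zero_add]
      show ((uv.1 + P * uv.2) % P, (uv.1 + P * uv.2) / P) = uv
      rw [e1, e2]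
    · intro k _
      simp only
      rw [Nat.mod_add_div k P]
  rw [stepA, Finset.sum_product]
  -- Step C : split each term
  have stepC : ∀ u v : ℕ, eN N (b * ((u + P * v : ℕ) : ℤ) ^ 2)
      = eN N (b * (u : ℤ) ^ 2) * eN p ((2 * b * u) * v) := by
    intro u v
    have harg : b * ((u + P * v : ℕ) : ℤ) ^ 2
        = (b * (u : ℤ) ^ 2 + (P : ℤ) * ((2 * b * u) * v)) + (N : ℤ) * (((p ^ s : ℕ) : ℤ) * b * (v : ℤ) ^ 2) := by
      push_cast
      push_cast at hPNz
      linear_combination (b * (v : ℤ) ^ 2) * hPNz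
    rw [harg, eN_add, eN_add, eN_nat_mul, mul_one]
    congr 1
    have : eN N ((P : ℤ) * ((2 * b * u) * v)) = eN (p * P) ((P : ℤ) * ((2 * b * u) * v)) := by
      rw [hNP, mul_comm P p]
    rw [this, eN_mul_cancel p P hPpos.ne' ((2 * b * u) * v)]
  simp only [stepC]
  -- Step D : inner geometric sum
  have hdvd : ∀ u : ℕ, ((p : ℤ) ∣ 2 * b * u) ↔ (p ∣ u) := by
    intro u
    constructor
    · intro h
      have hpp : Prime (p : ℤ) := Nat.prime_iff_prime_int.mp hp
      rcases hpp.dvd_mul.mp h with h1 | h2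
      · rcases hpp.dvd_mul.mp h1 with h3 | h4
        · exfalso
          have : (p : ℤ) ∣ ((2 : ℕ) : ℤ) := by exact_mod_cast h3
          have : p ∣ 2 := Int.ofNat_dvd.mp this
          exact hp2 ((Nat.prime_dvd_prime_iff_eq hp Nat.prime_two).mp this)
        · exact absurd h4 hb
      · exact_mod_cast h2
    · intro h
      exact Dvd.dvd.mul_left (by exact_mod_cast h) _
  have stepD : ∀ u : ℕ, ∑ v ∈ Finset.range p, eN p ((2 * b * u) * v)
      = if p ∣ u then (p : ℂ) else 0 := by
    intro u
    rw [sum_eN_geom p hp0 (2 * b * u)]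
    simp only [hdvd u]
  rw [Finset.sum_congr rfl (fun u _ => by rw [← Finset.mul_sum, stepD u])]
  -- Step E : only multiples of p survive
  rw [Finset.sum_congr rfl (fun u _ => mul_ite (p ∣ u) (eN N (b * (u:ℤ)^2)) (p:ℂ) 0)]
  simp only [mul_zero]
  rw [← Finset.sum_filter]
  -- Step F : reindex multiples of p
  have stepF : ∑ u ∈ (Finset.range P).filter (fun u => p ∣ u), eN N (b * (u : ℤ) ^ 2) * (p : ℂ)
      = ∑ k ∈ Finset.range (p ^ s), eN N (b * ((p * k : ℕ) : ℤ) ^ 2) * (p : ℂ) := by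
    refine Finset.sum_nbij' (fun u => u / p) (fun k => p * k) ?_ ?_ ?_ ?_ ?_
    · intro u hu
      obtain ⟨hu1, hu2⟩ := Finset.mem_filter.mp hu
      rw [Finset.mem_range] at hu1 ⊢
      rw [Nat.div_lt_iff_lt_mul hppos]
      calc u < P := hu1
        _ = p ^ s * p * p / p := by rw [hPdef, pow_succ, Nat.mul_div_cancel _ hppos]
        _ ≤ p ^ s * p := by rw [Nat.mul_div_cancel _ hppos]
    · intro k hk
      rw [Finset.mem_range] at hk
      rw [Finset.mem_filter, Finset.mem_range]
      refine ⟨?_, Dvd.intro k rfl⟩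
      rw [hPdef, pow_succ, mul_comm (p^s) p]
      exact (Nat.mul_lt_mul_left hppos).mpr hk
    · intro u hu
      obtain ⟨_, hu2⟩ := Finset.mem_filter.mp hu
      exact Nat.mul_div_cancel' hu2
    · intro k _
      exact Nat.mul_div_cancel_left k hppos
    · intro u hu
      obtain ⟨_, hu2⟩ := Finset.mem_filter.mp hu
      rw [Nat.mul_div_cancel' hu2]
  rw [stepF]
  -- Step G : descend the modulus
  have stepG : ∀ k : ℕ, eN N (b * ((p * k : ℕ) : ℤ) ^ 2) = eN (p ^ s) (b * (k : ℤ) ^ 2) := by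
    intro k
    have harg : b * ((p * k : ℕ) : ℤ) ^ 2 = ((p ^ 2 : ℕ) : ℤ) * (b * (k : ℤ) ^ 2) := by
      push_cast
      ring
    rw [harg, hNpP, eN_mul_cancel (p ^ s) (p ^ 2) (pow_ne_zero _ hp0)]
  rw [Finset.sum_congr rfl (fun k _ => by rw [stepG k])]
  rw [← Finset.sum_mul]
  ring

lemma Gprod (p : ℕ) [Fact p.Prime] (hp2 : p ≠ 2) (r : ℕ) (b : Fin 4 → ℤ)
    (hb : ∀ i, ¬((p : ℤ) ∣ b i)) :
    ∏ i : Fin 4, (∑ k ∈ Finset.range (p ^ r), eN (p ^ r) (b i * (k : ℤ) ^ 2))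
      = (∏ i : Fin 4, ((quadraticChar (ZMod p)).ringHomComp (Int.castRingHom ℂ))
            ((b i : ZMod p))) ^ r * (p : ℂ) ^ (2 * r) := by
  haveI : NeZero p := ⟨(Fact.out : p.Prime).ne_zero⟩
  have hp : p.Prime := Fact.out
  set χ' := (quadraticChar (ZMod p)).ringHomComp (Int.castRingHom ℂ) with hχ'
  have hbz : ∀ i, ((b i : ZMod p)) ≠ 0 := fun i h =>
    hb i ((ZMod.intCast_zmod_eq_zero_iff_dvd _ _).mp h)
  have hCC : (∏ i : Fin 4, χ' ((b i : ZMod p))) * (∏ i : Fin 4, χ' ((b i : ZMod p))) = 1 := by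
    rw [← Finset.prod_mul_distrib]
    rw [Finset.prod_congr rfl (fun i _ => ?_), Finset.prod_const_one]
    have : χ' ((b i : ZMod p)) = ((quadraticChar (ZMod p) ((b i : ZMod p)) : ℤ) : ℂ) := rfl
    rw [this, ← Int.cast_mul, ← pow_two, quadraticChar_sq_one (hbz i)]
    norm_num
  induction r using Nat.strong_induction_on with
  | _ r ih =>
    match r with
    | 0 => simp [eN_zero]
    | 1 =>
      have hfac : ∀ i : Fin 4, ∑ k ∈ Finset.range (p ^ 1), eN (p ^ 1) (b i * (k : ℤ) ^ 2)
          = χ' ((b i : ZMod p)) * gaussSum χ' ZMod.stdAddChar := by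
        intro i
        rw [pow_one]
        have hconv : ∑ k ∈ Finset.range p, eN p (b i * (k : ℤ) ^ 2)
            = ∑ t : ZMod p, ZMod.stdAddChar ((b i : ZMod p) * t ^ 2) := by
          rw [← sum_range_zmod p (fun t => ZMod.stdAddChar ((b i : ZMod p) * t ^ 2))]
          refine Finset.sum_congr rfl fun k _ => ?_
          rw [eN_std]
          congr 1
          push_cast
          ring
        rw [hconv]
        exact Gp_base p hp2 _ (hbz i)
      rw [Finset.prod_congr rfl (fun i _ => hfac i), Finset.prod_mul_distrib,
        Finset.prod_const]
      have hcard : (Finset.univ : Finset (Fin 4)).card = 4 := by simp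
      rw [hcard, gauss4 p hp2]
      norm_num
    | (s + 2) =>
      have hfac : ∀ i : Fin 4, ∑ k ∈ Finset.range (p ^ (s + 2)), eN (p ^ (s + 2)) (b i * (k : ℤ) ^ 2)
          = (p : ℂ) * ∑ k ∈ Finset.range (p ^ s), eN (p ^ s) (b i * (k : ℤ) ^ 2) :=
        fun i => Grec p hp hp2 (b i) (hb i) s
      rw [Finset.prod_congr rfl (fun i _ => hfac i), Finset.prod_mul_distrib,
        Finset.prod_const, ih s (by omega)]
      have hcard : (Finset.univ : Finset (Fin 4)).card = 4 := by simp
      rw [hcard]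
      set C := ∏ i : Fin 4, χ' ((b i : ZMod p)) with hC
      have : C ^ (s + 2) = C ^ s := by
        rw [pow_add, pow_two, hCC, mul_one]
      rw [this]
      ring

lemma addChar_sum {A : Type*} [AddCommMonoid A] (ψ : AddChar A ℂ) {ι : Type*} (s : Finset ι)
    (f : ι → A) : ψ (∑ i ∈ s, f i) = ∏ i ∈ s, ψ (f i) := by
  induction s using Finset.cons_induction with
  | empty => simp
  | cons a s ha ih => rw [Finset.sum_cons, Finset.prod_cons, AddChar.map_add_eq_mul, ih]

lemma isUnit_intCast_zmod (N : ℕ) [NeZero N] (z : ℤ) (h : Nat.Coprime z.natAbs N) :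
    IsUnit ((z : ZMod N)) := by
  have hu : IsUnit ((z.natAbs : ZMod N)) := (ZMod.isUnit_iff_coprime _ _).mpr h
  rcases Int.natAbs_eq z with hz | hz
  · rw [hz, Int.cast_natCast]; exact hu
  · rw [hz, Int.cast_neg, Int.cast_natCast]; exact hu.neg

/-- Iwaniec–Munshi, Lemma 4.4: for odd primes `p ∤ 2α` and `r ≥ 1`,
`S_{1,p^r}(w) = χ_p(α)^r · p^{2r} · c_{p^r}(ψ̃₁(w))`. -/
theorem stmt_13 (a : Fin 4 → ℤ) (ha : ∀ i, a i ≠ 0)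
    (p : ℕ) (hp : Nat.Prime p) (hodd : Odd p)
    (hpα : ¬ ((p : ℤ) ∣ 2 * (a 0 * a 1 * a 2 * a 3)))
    (r : ℕ) (hr : 1 ≤ r) (w : Fin 4 → ℤ) :
    S1 a (p ^ r) w =
      ((jacobiSym (a 0 * a 1 * a 2 * a 3) p : ℂ)) ^ r * (p : ℂ) ^ (2 * r) *
        ramanujanSum (p ^ r) (psit a w) := by
  haveI : Fact p.Prime := ⟨hp⟩
  haveI : NeZero p := ⟨hp.ne_zero⟩
  set α : ℤ := a 0 * a 1 * a 2 * a 3 with hα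
  have hprod : (∏ j, a j) = α := by rw [hα, Fin.prod_univ_four]
  set N := p ^ r with hN
  haveI instN : NeZero N := ⟨pow_ne_zero r hp.ne_zero⟩
  have hp2 : p ≠ 2 := by rintro rfl; revert hodd; decide
  have hpp : Prime (p : ℤ) := Nat.prime_iff_prime_int.mp hp
  have hp2' : ¬ ((p : ℤ) ∣ 2) := by
    intro h
    have : p ∣ 2 := by exact_mod_cast h
    exact hp2 ((Nat.prime_dvd_prime_iff_eq hp Nat.prime_two).mp this)
  have hpα' : ¬ ((p : ℤ) ∣ α) := fun h => hpα (h.mul_left 2)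
  have hp4 : ¬ ((p : ℤ) ∣ 4) := by
    intro h
    rcases hpp.dvd_mul.mp (show (p:ℤ) ∣ 2 * 2 by norm_num at h ⊢; exact h) with h | h <;>
      exact hp2' h
  have hpa : ∀ i, ¬ ((p : ℤ) ∣ a i) := by
    intro i hdvd
    apply hpα'
    refine hdvd.trans ?_
    have : a i ∣ ∏ j, a j := Finset.dvd_prod_of_mem a (Finset.mem_univ i)
    rwa [hprod] at this
  have hdvd_ai : ∀ i, a i ∣ (∏ j, a j) := fun i => Finset.dvd_prod_of_mem a (Finset.mem_univ i)
  have hexact : ∀ i, a i * ((∏ j, a j) / a i) = α := fun i => by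
    rw [Int.mul_ediv_cancel' (hdvd_ai i), hprod]
  have hcop_of_not_dvd : ∀ z : ℤ, ¬ ((p : ℤ) ∣ z) → Nat.Coprime z.natAbs N := by
    intro z hz
    rw [hN]
    have hnd : ¬ p ∣ z.natAbs := fun hh =>
      hz (Int.dvd_natAbs.mp (Int.natCast_dvd_natCast.mpr hh))
    exact Nat.Coprime.pow_right r (Nat.coprime_comm.mp ((Nat.Prime.coprime_iff_not_dvd hp).mpr hnd))
  set χ' := (quadraticChar (ZMod p)).ringHomComp (Int.castRingHom ℂ) with hχ'
  set T : ℤ := psit a w with hT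
  set Tb : ZMod N := ((T : ℤ) : ZMod N) with hTb
  set C : ZMod N := ((4 * α : ℤ) : ZMod N) with hC
  set J : ℂ := (jacobiSym α p : ℂ) with hJ
  have hCunit : IsUnit C :=
    isUnit_intCast_zmod N _ (hcop_of_not_dvd _ (fun h => by
      rcases hpp.dvd_mul.mp h with h | h
      · exact hp4 h
      · exact hpα' h))
  -- coprime x N facts
  have hpx : ∀ x : ℕ, Nat.Coprime x N → ¬ p ∣ x := by
    intro x hx hdvd
    have hdvdN : p ∣ N := by rw [hN]; exact dvd_pow_self p (by omega)
    have h1 : p ∣ Nat.gcd x N := Nat.dvd_gcd hdvd hdvdN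
    rw [Nat.Coprime] at hx
    rw [hx, Nat.dvd_one] at h1
    exact hp.one_lt.ne' h1
  -- MAIN inner evaluation
  have inner_eval : ∀ x : ℕ, Nat.Coprime x N →
      (∑ k ∈ Fintype.piFinset fun _ : Fin 4 => Finset.range N,
        eN N ((x : ℤ) * psi a (fun i => (k i : ℤ)) + ∑ i, w i * (k i : ℤ)))
      = ZMod.stdAddChar (-(C * (x : ZMod N))⁻¹ * Tb) * (J ^ r * (p : ℂ) ^ (2 * r)) := by
    intro x hx
    have hpxx : ¬ ((p : ℤ) ∣ (x : ℤ)) := by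
      intro h
      exact hpx x hx (by exact_mod_cast h)
    have hp4ax : ¬ ((p : ℤ) ∣ (4 * α * (x : ℤ))) := by
      intro h
      rcases hpp.dvd_mul.mp h with h | h
      · rcases hpp.dvd_mul.mp h with h | h
        · exact hp4 h
        · exact hpα' h
      · exact hpxx h
    have hxu : IsUnit (((4 * α * (x : ℤ) : ℤ)) : ZMod N) :=
      isUnit_intCast_zmod N _ (hcop_of_not_dvd _ hp4ax)
    set Y : ZMod N := (((4 * α * (x : ℤ) : ℤ)) : ZMod N)⁻¹ with hY
    have hYmul : (((4 * α * (x : ℤ) : ℤ)) : ZMod N) * Y = 1 := ZMod.mul_inv_of_unit _ hxu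
    have hasm : ∀ i : Fin 4,
        (2 : ZMod N) * (((x : ℤ) * a i : ℤ) : ZMod N)
          * ((((2 * ((∏ j, a j) / a i) * w i : ℤ)) : ZMod N) * Y)
        = ((w i : ℤ) : ZMod N) := by
      intro i
      have hc1 : ((a i : ℤ) : ZMod N) * ((((∏ j, a j) / a i : ℤ)) : ZMod N) = ((α : ℤ) : ZMod N) := by
        rw [← Int.cast_mul, hexact i]
      have hYc : (4 : ZMod N) * ((α : ℤ) : ZMod N) * ((x : ℕ) : ZMod N) * Y = 1 := by
        rw [← hYmul]
        congr 1
        push_cast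
        ring
      push_cast
      linear_combination (4 * ((x : ℕ) : ZMod N) * ((w i : ℤ) : ZMod N) * Y) * hc1
        + ((w i : ℤ) : ZMod N) * hYc
    have hphase : ∀ i : Fin 4,
        -((((x : ℤ) * a i : ℤ) : ZMod N)
            * ((((2 * ((∏ j, a j) / a i) * w i : ℤ)) : ZMod N) * Y) ^ 2)
        = -(Y * ((((∏ j, a j) / a i) * w i ^ 2 : ℤ) : ZMod N)) := by
      intro i
      have hc1 : ((a i : ℤ) : ZMod N) * ((((∏ j, a j) / a i : ℤ)) : ZMod N) = ((α : ℤ) : ZMod N) := by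
        rw [← Int.cast_mul, hexact i]
      have hYc : (4 : ZMod N) * ((α : ℤ) : ZMod N) * ((x : ℕ) : ZMod N) * Y = 1 := by
        rw [← hYmul]
        congr 1
        push_cast
        ring
      push_cast
      linear_combination (-(4 * ((x : ℕ) : ZMod N) * ((((∏ j, a j) / a i : ℤ)) : ZMod N)
          * ((w i : ℤ) : ZMod N) ^ 2 * Y ^ 2)) * hc1
        + (-(Y * ((((∏ j, a j) / a i : ℤ)) : ZMod N) * ((w i : ℤ) : ZMod N) ^ 2)) * hYc
    have hCx : C * ((x : ℕ) : ZMod N) = (((4 * α * (x : ℤ)) : ℤ) : ZMod N) := by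
      rw [hC]; push_cast; ring
    calc (∑ k ∈ Fintype.piFinset fun _ : Fin 4 => Finset.range N,
          eN N ((x : ℤ) * psi a (fun i => (k i : ℤ)) + ∑ i, w i * (k i : ℤ)))
        = ∑ k ∈ Fintype.piFinset fun _ : Fin 4 => Finset.range N, ∏ i : Fin 4,
            ZMod.stdAddChar ((((x : ℤ) * a i : ℤ) : ZMod N) * ((k i : ℕ) : ZMod N) ^ 2
              + ((w i : ℤ) : ZMod N) * ((k i : ℕ) : ZMod N)) := by
          refine Finset.sum_congr rfl fun k _ => ?_
          rw [eN_std]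
          have harg : (((x : ℤ) * psi a (fun i => (k i : ℤ)) + ∑ i, w i * (k i : ℤ) : ℤ) : ZMod N)
              = ∑ i : Fin 4, ((((x : ℤ) * a i : ℤ) : ZMod N) * ((k i : ℕ) : ZMod N) ^ 2
                  + ((w i : ℤ) : ZMod N) * ((k i : ℕ) : ZMod N)) := by
            rw [psi, Finset.mul_sum, ← Finset.sum_add_distrib]
            push_cast
            refine Finset.sum_congr rfl fun i _ => ?_
            ring
          rw [harg, addChar_sum]
      _ = ∏ i : Fin 4, ∑ t ∈ Finset.range N,
            ZMod.stdAddChar ((((x : ℤ) * a i : ℤ) : ZMod N) * ((t : ℕ) : ZMod N) ^ 2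
              + ((w i : ℤ) : ZMod N) * ((t : ℕ) : ZMod N)) :=
          (Finset.prod_univ_sum (fun _ : Fin 4 => Finset.range N)
            (fun i t => ZMod.stdAddChar ((((x : ℤ) * a i : ℤ) : ZMod N) * ((t : ℕ) : ZMod N) ^ 2
              + ((w i : ℤ) : ZMod N) * ((t : ℕ) : ZMod N)))).symm
      _ = ∏ i : Fin 4, ∑ t : ZMod N,
            ZMod.stdAddChar ((((x : ℤ) * a i : ℤ) : ZMod N) * t ^ 2
              + ((w i : ℤ) : ZMod N) * t) := by
          refine Finset.prod_congr rfl fun i _ => ?_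
          exact sum_range_zmod N (fun t => ZMod.stdAddChar ((((x : ℤ) * a i : ℤ) : ZMod N) * t ^ 2
              + ((w i : ℤ) : ZMod N) * t))
      _ = ∏ i : Fin 4, (ZMod.stdAddChar (-(Y * ((((∏ j, a j) / a i) * w i ^ 2 : ℤ) : ZMod N)))
            * ∑ t : ZMod N, ZMod.stdAddChar ((((x : ℤ) * a i : ℤ) : ZMod N) * t ^ 2)) := by
          refine Finset.prod_congr rfl fun i _ => ?_
          rw [complete_sq _ _ _ (hasm i), hphase i]
      _ = (∏ i : Fin 4, ZMod.stdAddChar (-(Y * ((((∏ j, a j) / a i) * w i ^ 2 : ℤ) : ZMod N))))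
            * ∏ i : Fin 4, ∑ t : ZMod N,
                ZMod.stdAddChar ((((x : ℤ) * a i : ℤ) : ZMod N) * t ^ 2) :=
          Finset.prod_mul_distrib
      _ = ZMod.stdAddChar (-(C * (x : ZMod N))⁻¹ * Tb)
            * ∏ i : Fin 4, ∑ t : ZMod N,
                ZMod.stdAddChar ((((x : ℤ) * a i : ℤ) : ZMod N) * t ^ 2) := by
          congr 1
          rw [← addChar_sum]
          congr 1
          have hsum : ∑ i : Fin 4, -(Y * ((((∏ j, a j) / a i) * w i ^ 2 : ℤ) : ZMod N))
              = -(Y * Tb) := by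
            rw [hTb, hT, psit]
            push_cast
            rw [Finset.mul_sum, ← Finset.sum_neg_distrib]
          rw [hsum, hCx, hY]
          ring
      _ = ZMod.stdAddChar (-(C * (x : ZMod N))⁻¹ * Tb) * (J ^ r * (p : ℂ) ^ (2 * r)) := by
          congr 1
          have hconv : ∀ i : Fin 4, ∑ t : ZMod N,
              ZMod.stdAddChar ((((x : ℤ) * a i : ℤ) : ZMod N) * t ^ 2)
              = ∑ k ∈ Finset.range (p ^ r), eN (p ^ r) (((x : ℤ) * a i) * (k : ℤ) ^ 2) := by
            intro i
            rw [← sum_range_zmod N (fun t =>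
              ZMod.stdAddChar ((((x : ℤ) * a i : ℤ) : ZMod N) * t ^ 2))]
            refine Finset.sum_congr rfl fun k _ => ?_
            rw [eN_std]
            congr 1
            push_cast
            ring
          rw [Finset.prod_congr rfl fun i _ => hconv i]
          have hbnd : ∀ i : Fin 4, ¬ ((p : ℤ) ∣ ((x : ℤ) * a i)) := by
            intro i h
            rcases hpp.dvd_mul.mp h with h | h
            · exact hpxx h
            · exact hpa i h
          rw [Gprod p hp2 r (fun i => (x : ℤ) * a i) hbnd]
          congr 1
          have hXne : (((x : ℤ) : ZMod p)) ≠ 0 := fun h =>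
            hpxx ((ZMod.intCast_zmod_eq_zero_iff_dvd _ _).mp h)
          have hfac : ∀ i : Fin 4, χ' ((((x : ℤ) * a i : ℤ)) : ZMod p)
              = χ' (((x : ℤ) : ZMod p)) * χ' (((a i : ℤ) : ZMod p)) := by
            intro i
            rw [Int.cast_mul, map_mul]
          rw [Finset.prod_congr rfl fun i _ => hfac i, Finset.prod_mul_distrib,
            Finset.prod_const]
          have hcard : (Finset.univ : Finset (Fin 4)).card = 4 := by simp
          rw [hcard]
          have hX4 : χ' (((x : ℤ) : ZMod p)) ^ 4 = 1 := by
            have : χ' (((x : ℤ) : ZMod p))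
                = ((quadraticChar (ZMod p) (((x : ℤ) : ZMod p)) : ℤ) : ℂ) := rfl
            rw [this, ← Int.cast_pow, show (4 : ℕ) = 2 * 2 from rfl, pow_mul,
              quadraticChar_sq_one hXne]
            norm_num
          have hprodχ : ∏ i : Fin 4, χ' (((a i : ℤ) : ZMod p)) = J := by
            rw [← map_prod]
            have : ∏ i : Fin 4, ((a i : ℤ) : ZMod p) = ((α : ℤ) : ZMod p) := by
              rw [Fin.prod_univ_four, hα]
              push_cast
              ring
            rw [this]
            have h1 : χ' ((α : ℤ) : ZMod p) = ((legendreSym p α : ℤ) : ℂ) := rfl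
            rw [h1, jacobiSym.legendreSym.to_jacobiSym, hJ]
          rw [hX4, one_mul, hprodχ]
  -- Outer assembly
  have step1 : S1 a N w
      = ∑ x ∈ (Finset.range N).filter (fun x => Nat.Coprime x N),
          ZMod.stdAddChar (-(C * (x : ZMod N))⁻¹ * Tb) * (J ^ r * (p : ℂ) ^ (2 * r)) := by
    unfold S1
    refine Finset.sum_congr rfl fun x hx => ?_
    have hcop : Nat.Coprime x N := (Finset.mem_filter.mp hx).2
    rw [← inner_eval x hcop]
    refine Finset.sum_congr rfl fun k _ => ?_
    rw [eN]
    congr 1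
    push_cast
    ring
  have ram : ∑ x ∈ (Finset.range N).filter (fun x => Nat.Coprime x N),
      ZMod.stdAddChar (-(C * (x : ZMod N))⁻¹ * Tb) = ramanujanSum N T := by
    obtain ⟨U, hU⟩ := hCunit
    calc ∑ x ∈ (Finset.range N).filter (fun x => Nat.Coprime x N),
        ZMod.stdAddChar (-(C * (x : ZMod N))⁻¹ * Tb)
        = ∑ u : (ZMod N)ˣ, ZMod.stdAddChar (-(C * (u : ZMod N))⁻¹ * Tb) :=
          sum_coprime_units N (fun z => ZMod.stdAddChar (-(C * z)⁻¹ * Tb))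
      _ = ∑ u : (ZMod N)ˣ,
            ZMod.stdAddChar ((((-(U * u)⁻¹ : (ZMod N)ˣ) : ZMod N)) * Tb) := by
          refine Finset.sum_congr rfl fun u _ => ?_
          congr 2
          rw [← hU, ← Units.val_mul, ZMod.inv_coe_unit, ← Units.val_neg]
      _ = ∑ v : (ZMod N)ˣ, ZMod.stdAddChar ((v : ZMod N) * Tb) := by
          have hbij := Equiv.sum_comp
            ((Equiv.mulLeft U).trans ((Equiv.inv (ZMod N)ˣ).trans (Equiv.neg (ZMod N)ˣ)))
            (fun v : (ZMod N)ˣ => ZMod.stdAddChar ((v : ZMod N) * Tb))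
          exact hbij
      _ = ∑ x ∈ (Finset.range N).filter (fun x => Nat.Coprime x N),
            ZMod.stdAddChar ((x : ZMod N) * Tb) :=
          (sum_coprime_units N (fun z => ZMod.stdAddChar (z * Tb))).symm
      _ = ramanujanSum N T := by
          unfold ramanujanSum
          refine Finset.sum_congr rfl fun x hx => ?_
          rw [show ((x : ZMod N) * Tb) = ((((x : ℤ) * T : ℤ)) : ZMod N) by
            rw [hTb]; push_cast; ring, ← eN_std, eN]
          congr 1
          push_cast
          ring
  rw [step1, ← Finset.sum_mul, ram]
  ring
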